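/- Let R be a category, W a multiplicative class of morphisms of R with associated wide subcategory 𝒲, x and y objects of R, and m = (t 1, …, t p) a zigzag word of length p ≥ 1. Then: (i) if t p = A, the evaluation-at-vertex-p functor Fun_s(m, R; x) ⥤ 𝒲 is a Grothendieck opfibration (i.e., the induced functor on opposite categories is a Grothendieck fibration in the sense of Mathlib's CategoryTheory.Functor.IsFibered); (ii) if t p = W, the evaluation-at-vertex-p functor Fun_s(m, R; x) ⥤ 𝒲 is a Grothendieck fibration; (iii) if t 1 = W, the evaluation-at-vertex-0 functor Fun_t(m, R; y) ⥤ 𝒲 is a Grothendieck opfibration; and (iv) if t 1 = A, the evaluation-at-vertex-0 functor Fun_t(m, R; y) ⥤ 𝒲 is a Grothendieck fibration. -/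

import Mathlib

open CategoryTheory

/-- The two symbols of which zigzag words are composed: `A` ("any arbitrary arrow") and
`W` ("backward weak equivalence"). -/
inductive ZigSym : Type
  | A : ZigSym
  | W : ZigSym
  deriving DecidableEq

/-- A zigzag word is a list of symbols. -/
abbrev ZigzagWord : Type := List ZigSym

/-- The vertices of the zigzag quiver of a word `m`: `0, 1, …, m.length`. -/
def ZigVert (m : ZigzagWord) : Type := Fin (m.length + 1)

/-- A vertex of the zigzag quiver. -/
def ZigVert.mk (m : ZigzagWord) (k : Fin (m.length + 1)) : ZigVert m := k

/-- The underlying natural number of a vertex. -/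
def ZigVert.toNat {m : ZigzagWord} (a : ZigVert m) : ℕ :=
  (show Fin (m.length + 1) from a).val

/-- There is exactly one arrow `(k-1) ⟶ k` for each `k` with `t k = A`, and exactly one
arrow `k ⟶ (k-1)` for each `k` with `t k = W` (in `1`-indexed notation). -/
def ZigHomP (m : ZigzagWord) (a b : ZigVert m) : Prop :=
  ∃ (k : ℕ) (hk : k < m.length),
    (m[k]'hk = ZigSym.A ∧ a.toNat = k ∧ b.toNat = k + 1) ∨
    (m[k]'hk = ZigSym.W ∧ a.toNat = k + 1 ∧ b.toNat = k)

instance (m : ZigzagWord) : Quiver.{0} (ZigVert m) :=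
  ⟨fun a b => PLift (ZigHomP m a b)⟩

/-- The zigzag category `Z(m)` of a zigzag word `m`: the free category on the zigzag
quiver of `m`. -/
abbrev ZigCat (m : ZigzagWord) : Type := Paths (ZigVert m)

/-- The vertex `0` (the source). -/
def zigSource (m : ZigzagWord) : ZigVert m := ZigVert.mk m 0

/-- The vertex `p = m.length` (the target). -/
def zigTarget (m : ZigzagWord) : ZigVert m := ZigVert.mk m (Fin.last m.length)

/-- The prefunctor `ZigVert m ⥤q ZigVert (m ++ m')` induced by the vertex map `k ↦ k`. -/
def zigIncl₁Prefunctor (m m' : ZigzagWord) : ZigVert m ⥤q ZigVert (m ++ m') where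
  obj a := ZigVert.mk _ ⟨a.toNat, by
    have : a.toNat < m.length + 1 := (show Fin (m.length + 1) from a).isLt
    simp only [List.length_append]
    omega⟩
  map {a b} e := PLift.up (by
    obtain ⟨k, hk, h⟩ := e.down
    refine ⟨k, by simp only [List.length_append]; omega, ?_⟩
    have hget : (m ++ m')[k]'(by simp only [List.length_append]; omega) = m[k]'hk :=
      List.getElem_append_left hk
    rcases h with ⟨hA, ha, hb⟩ | ⟨hW, ha, hb⟩
    · exact Or.inl ⟨hget.trans hA, by simpa [ZigVert.toNat, ZigVert.mk] using ha,
        by simpa [ZigVert.toNat, ZigVert.mk] using hb⟩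
    · exact Or.inr ⟨hget.trans hW, by simpa [ZigVert.toNat, ZigVert.mk] using ha,
        by simpa [ZigVert.toNat, ZigVert.mk] using hb⟩)

/-- The prefunctor `ZigVert m' ⥤q ZigVert (m ++ m')` induced by the vertex map
`k ↦ m.length + k`. -/
def zigIncl₂Prefunctor (m m' : ZigzagWord) : ZigVert m' ⥤q ZigVert (m ++ m') where
  obj a := ZigVert.mk _ ⟨m.length + a.toNat, by
    have : a.toNat < m'.length + 1 := (show Fin (m'.length + 1) from a).isLt
    simp only [List.length_append]
    omega⟩
  map {a b} e := PLift.up (by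
    obtain ⟨k, hk, h⟩ := e.down
    refine ⟨m.length + k, by simp only [List.length_append]; omega, ?_⟩
    have hget : (m ++ m')[m.length + k]'(by simp only [List.length_append]; omega) =
        m'[k]'hk := by
      have := List.getElem_append_right (as := m) (bs := m') (i := m.length + k)
        (Nat.le_add_right _ _) (h₂ := by simp only [List.length_append]; omega)
      simpa using this
    rcases h with ⟨hA, ha, hb⟩ | ⟨hW, ha, hb⟩
    · exact Or.inl ⟨hget.trans hA, by simp [ZigVert.toNat, ZigVert.mk] at ha ⊢; omega,
        by simp [ZigVert.toNat, ZigVert.mk] at hb ⊢; omega⟩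
    · exact Or.inr ⟨hget.trans hW, by simp [ZigVert.toNat, ZigVert.mk] at ha ⊢; omega,
        by simp [ZigVert.toNat, ZigVert.mk] at hb ⊢; omega⟩)

/-- The functor `ι : Z(m) ⥤ Z(m ++ m')` induced by the vertex map `k ↦ k`. -/
def zigIncl₁ (m m' : ZigzagWord) : ZigCat m ⥤ ZigCat (m ++ m') :=
  Paths.lift ((zigIncl₁Prefunctor m m').comp (Paths.of _))

/-- The functor `ι' : Z(m') ⥤ Z(m ++ m')` induced by the vertex map `k ↦ m.length + k`. -/
def zigIncl₂ (m m' : ZigzagWord) : ZigCat m' ⥤ ZigCat (m ++ m') :=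
  Paths.lift ((zigIncl₂Prefunctor m m').comp (Paths.of _))

universe v u

variable {R : Type u} [Category.{v} R]

/-- The generating arrow `e : a ⟶ b` is one of the backward ("weak equivalence") arrows
`k ⟶ (k-1)` corresponding to a letter `W` of the word `m`. -/
def IsWArrow (m : ZigzagWord) {a b : ZigVert m} (_ : a ⟶ b) : Prop :=
  ∃ (k : ℕ) (hk : k < m.length),
    m[k]'hk = ZigSym.W ∧ a.toNat = k + 1 ∧ b.toNat = k

/-- A functor `T : Z(m) ⥤ R` is a relative functor of type `m` if it sends each generating
arrow corresponding to a letter `W` of `m` to a morphism lying in `W`. -/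
def IsRelFunctor (m : ZigzagWord) (W : MorphismProperty R) (T : ZigCat m ⥤ R) : Prop :=
  ∀ ⦃a b : ZigVert m⦄ (e : a ⟶ b), IsWArrow m e → W (T.map ((Paths.of _).map e))

/-- The wide subcategory `𝒲` of `R` associated to a multiplicative class `W` of morphisms:
same objects, and morphisms those of `R` lying in `W`. -/
def WideSub (W : MorphismProperty R) : Type u := R

/-- An object of `R`, seen in the wide subcategory. -/
def WideSub.mk (W : MorphismProperty R) (r : R) : WideSub W := r

instance (W : MorphismProperty R) [W.IsMultiplicative] : Category.{v} (WideSub W) where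
  Hom a b := { f : (show R from a) ⟶ (show R from b) // W f }
  id a := ⟨𝟙 _, W.id_mem _⟩
  comp f g := ⟨f.1 ≫ g.1, W.comp_mem _ _ f.2 g.2⟩
  id_comp f := Subtype.ext (Category.id_comp f.1)
  comp_id f := Subtype.ext (Category.comp_id f.1)
  assoc f g h := Subtype.ext (Category.assoc f.1 g.1 h.1)

/-- The category `Fun_s(m, R; x)`: objects are the relative functors `T` of type `m` with
`T(0) = x`. -/
structure FunS (m : ZigzagWord) (W : MorphismProperty R) (x : R) : Type max u v where
  T : ZigCat m ⥤ R
  rel : IsRelFunctor m W T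
  hx : T.obj ((Paths.of _).obj (zigSource m)) = x

/-- Morphisms of `Fun_s(m, R; x)`: natural transformations all of whose components lie in
`W` and whose component at the vertex `0` is the identity of `x`. -/
structure FunS.Hom {m : ZigzagWord} {W : MorphismProperty R} {x : R}
    (X Y : FunS m W x) : Type v where
  η : X.T ⟶ Y.T
  mem : ∀ v : ZigCat m, W (η.app v)
  h₀ : η.app ((Paths.of _).obj (zigSource m)) = eqToHom (X.hx.trans Y.hx.symm)

theorem FunS.Hom.ext' {m : ZigzagWord} {W : MorphismProperty R} {x : R} {X Y : FunS m W x}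
    {f g : FunS.Hom X Y} (h : f.η = g.η) : f = g := by
  cases f; cases g; cases h; rfl

instance {m : ZigzagWord} (W : MorphismProperty R) [W.IsMultiplicative] (x : R) :
    Category.{v} (FunS m W x) where
  Hom X Y := FunS.Hom X Y
  id X := { η := 𝟙 X.T, mem := fun v => W.id_mem _, h₀ := by simp }
  comp f g :=
    { η := f.η ≫ g.η
      mem := fun v => W.comp_mem _ _ (f.mem v) (g.mem v)
      h₀ := by rw [NatTrans.comp_app, f.h₀, g.h₀, eqToHom_trans] }
  id_comp f := FunS.Hom.ext' (by simp)
  comp_id f := FunS.Hom.ext' (by simp)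
  assoc f g h := FunS.Hom.ext' (by simp)

/-- The category `Fun_t(m, R; y)`: objects are the relative functors `T` of type `m` with
`T(p) = y`. -/
structure FunT (m : ZigzagWord) (W : MorphismProperty R) (y : R) : Type max u v where
  T : ZigCat m ⥤ R
  rel : IsRelFunctor m W T
  hy : T.obj ((Paths.of _).obj (zigTarget m)) = y

/-- Morphisms of `Fun_t(m, R; y)`: natural transformations all of whose components lie in
`W` and whose component at the vertex `p` is the identity of `y`. -/
structure FunT.Hom {m : ZigzagWord} {W : MorphismProperty R} {y : R}
    (X Y : FunT m W y) : Type v where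
  η : X.T ⟶ Y.T
  mem : ∀ v : ZigCat m, W (η.app v)
  hₚ : η.app ((Paths.of _).obj (zigTarget m)) = eqToHom (X.hy.trans Y.hy.symm)

theorem FunT.Hom.ext' {m : ZigzagWord} {W : MorphismProperty R} {y : R} {X Y : FunT m W y}
    {f g : FunT.Hom X Y} (h : f.η = g.η) : f = g := by
  cases f; cases g; cases h; rfl

instance {m : ZigzagWord} (W : MorphismProperty R) [W.IsMultiplicative] (y : R) :
    Category.{v} (FunT m W y) where
  Hom X Y := FunT.Hom X Y
  id X := { η := 𝟙 X.T, mem := fun v => W.id_mem _, hₚ := by simp }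
  comp f g :=
    { η := f.η ≫ g.η
      mem := fun v => W.comp_mem _ _ (f.mem v) (g.mem v)
      hₚ := by rw [NatTrans.comp_app, f.hₚ, g.hₚ, eqToHom_trans] }
  id_comp f := FunT.Hom.ext' (by simp)
  comp_id f := FunT.Hom.ext' (by simp)
  assoc f g h := FunT.Hom.ext' (by simp)

/-- Evaluation at the vertex `p` on `Fun_s(m, R; x)`, as a functor to the wide
subcategory `𝒲`. -/
def evalTarget (m : ZigzagWord) (W : MorphismProperty R) [W.IsMultiplicative] (x : R) :
    FunS m W x ⥤ WideSub W where
  obj X := WideSub.mk W (X.T.obj ((Paths.of _).obj (zigTarget m)))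
  map f := ⟨f.η.app ((Paths.of _).obj (zigTarget m)), f.mem _⟩
  map_id X := rfl
  map_comp f g := rfl

/-- Evaluation at the vertex `0` on `Fun_t(m, R; y)`, as a functor to the wide
subcategory `𝒲`. -/
def evalSource (m : ZigzagWord) (W : MorphismProperty R) [W.IsMultiplicative] (y : R) :
    FunT m W y ⥤ WideSub W where
  obj X := WideSub.mk W (X.T.obj ((Paths.of _).obj (zigSource m)))
  map f := ⟨f.η.app ((Paths.of _).obj (zigSource m)), f.mem _⟩
  map_id X := rfl
  map_comp f g := rfl

/-! ### Auxiliary machinery -/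

section Aux

lemma w_eqToHom (W : MorphismProperty R) [W.IsMultiplicative] {a b : R} (h : a = b) :
    W (eqToHom h) := by
  subst h; simpa using W.id_mem a

@[simp] lemma WideSub.comp_val {W : MorphismProperty R} [W.IsMultiplicative]
    {a b c : WideSub W} (f : a ⟶ b) (g : b ⟶ c) : (f ≫ g).1 = f.1 ≫ g.1 := rfl

lemma WideSub.eqToHom_val {W : MorphismProperty R} [W.IsMultiplicative]
    {a b : WideSub W} (h : a = b) :
    (eqToHom h).1 = eqToHom (show (show R from a) = (show R from b) from h) := by
  subst h; rfl

/-- Build a natural transformation between functors out of a path category from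
naturality on generating arrows. -/
def pathsNatTrans {V : Type*} [Quiver V] {C : Type*} [Category C] (F G : Paths V ⥤ C)
    (α : ∀ v : V, F.obj v ⟶ G.obj v)
    (h : ∀ {a b : V} (e : a ⟶ b), F.map e.toPath ≫ α b = α a ≫ G.map e.toPath) :
    F ⟶ G where
  app v := α v
  naturality {a b} p := by
    refine Paths.induction (V := V)
      (fun {a b} f => F.map f ≫ α b = α a ≫ G.map f) (by simp) ?_ p
    intro u v w q e ih
    rw [Functor.map_comp, Functor.map_comp, Category.assoc]
    erw [h e]
    erw [← Category.assoc, ih]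
    exact Category.assoc _ _ _

end Aux

section Zig

variable {m : ZigzagWord}

lemma eq_vert {a u : ZigVert m} (h : a.toNat = u.toNat) : a = u := Fin.ext h

lemma not_into_target (hm : m ≠ []) (hW : m.getLast hm = ZigSym.W)
    {a b : ZigVert m} (e : a ⟶ b) : b.toNat ≠ (zigTarget m).toNat := by
  have hW' : m[m.length - 1]'(by
      have := List.length_pos_iff.mpr hm; omega) = ZigSym.W := by
    rw [← List.getLast_eq_getElem hm]; exact hW
  obtain ⟨k, hk, h⟩ := e.down
  show b.toNat ≠ m.length
  rcases h with ⟨hA, _, hb⟩ | ⟨_, _, hb⟩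
  · intro hbp
    have hk1 : k = m.length - 1 := by omega
    subst hk1
    rw [hW'] at hA
    exact ZigSym.noConfusion hA
  · omega

lemma not_from_target (hm : m ≠ []) (hA : m.getLast hm = ZigSym.A)
    {a b : ZigVert m} (e : a ⟶ b) : a.toNat ≠ (zigTarget m).toNat := by
  have hA' : m[m.length - 1]'(by
      have := List.length_pos_iff.mpr hm; omega) = ZigSym.A := by
    rw [← List.getLast_eq_getElem hm]; exact hA
  obtain ⟨k, hk, h⟩ := e.down
  show a.toNat ≠ m.length
  rcases h with ⟨_, ha, _⟩ | ⟨hW, ha, _⟩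
  · omega
  · intro hap
    have hk1 : k = m.length - 1 := by omega
    subst hk1
    rw [hA'] at hW
    exact ZigSym.noConfusion hW

lemma not_from_source (hm : m ≠ []) (hW : m.head hm = ZigSym.W)
    {a b : ZigVert m} (e : a ⟶ b) : a.toNat ≠ (zigSource m).toNat := by
  have hW' : m[0]'(List.length_pos_iff.mpr hm) = ZigSym.W := by
    rw [← List.head_eq_getElem_zero hm]; exact hW
  obtain ⟨k, hk, h⟩ := e.down
  show a.toNat ≠ 0
  rcases h with ⟨hA, ha, _⟩ | ⟨_, ha, _⟩
  · intro hap
    have hk1 : k = 0 := by omega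
    subst hk1
    rw [hW'] at hA
    exact ZigSym.noConfusion hA
  · omega

lemma not_into_source (hm : m ≠ []) (hA : m.head hm = ZigSym.A)
    {a b : ZigVert m} (e : a ⟶ b) : b.toNat ≠ (zigSource m).toNat := by
  have hA' : m[0]'(List.length_pos_iff.mpr hm) = ZigSym.A := by
    rw [← List.head_eq_getElem_zero hm]; exact hA
  obtain ⟨k, hk, h⟩ := e.down
  show b.toNat ≠ 0
  rcases h with ⟨_, _, hb⟩ | ⟨hW, _, hb⟩
  · omega
  · intro hbp
    have hk1 : k = 0 := by omega
    subst hk1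
    rw [hA'] at hW
    exact ZigSym.noConfusion hW

end Zig

section ModFib

variable {m : ZigzagWord} {W : MorphismProperty R} [W.IsMultiplicative]
variable (T : ZigCat m ⥤ R) (u : ZigVert m) (S : R)

/-- The functor obtained from `T` by replacing the object at the vertex `u` by `S`,
precomposing all arrows out of `u` with `w : S ⟶ T.obj u`; it is assumed that no
generating arrow of the quiver ends at `u`. -/
def modPreFib (w : S ⟶ T.obj u)
    (hno : ∀ {a b : ZigVert m} (_ : a ⟶ b), b.toNat ≠ u.toNat) : ZigVert m ⥤q R where
  obj v := if v.toNat = u.toNat then S else T.obj v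
  map {a b} e :=
    if ha : a.toNat = u.toNat then
      eqToHom (if_pos ha) ≫ w ≫ eqToHom (congrArg T.obj (eq_vert ha).symm) ≫
        T.map e.toPath ≫ eqToHom (if_neg (hno e)).symm
    else
      eqToHom (if_neg ha) ≫ T.map e.toPath ≫ eqToHom (if_neg (hno e)).symm

variable {T u S}
variable (w : S ⟶ T.obj u) (hno : ∀ {a b : ZigVert m} (_ : a ⟶ b), b.toNat ≠ u.toNat)

lemma modFib_obj (v : ZigVert m) :
    (Paths.lift (modPreFib T u S w hno)).obj v = if v.toNat = u.toNat then S else T.obj v :=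
  rfl

lemma modFib_rel (hT : IsRelFunctor m W T) (hw : W w) :
    IsRelFunctor m W (Paths.lift (modPreFib T u S w hno)) := by
  intro a b e he
  have h1 : W (T.map (Quiver.Hom.toPath e)) := hT e he
  show W ((Paths.lift (modPreFib T u S w hno)).map (Quiver.Hom.toPath e))
  rw [Paths.lift_toPath]
  unfold modPreFib
  dsimp only
  split
  · exact W.comp_mem _ _ (w_eqToHom W _) (W.comp_mem _ _ hw (W.comp_mem _ _ (w_eqToHom W _)
      (W.comp_mem _ _ h1 (w_eqToHom W _))))
  · exact W.comp_mem _ _ (w_eqToHom W _) (W.comp_mem _ _ h1 (w_eqToHom W _))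

/-- The component at `v` of the canonical map from the modified functor to `T`. -/
def modFibApp (v : ZigVert m) :
    (if v.toNat = u.toNat then S else T.obj v) ⟶ T.obj v :=
  if h : v.toNat = u.toNat then
    eqToHom (if_pos h) ≫ w ≫ eqToHom (congrArg T.obj (eq_vert h).symm)
  else eqToHom (if_neg h)

lemma modFibApp_mem (hw : W w) (v : ZigVert m) : W (modFibApp w v) := by
  unfold modFibApp
  split
  · exact W.comp_mem _ _ (w_eqToHom W _) (W.comp_mem _ _ hw (w_eqToHom W _))
  · exact w_eqToHom W _

lemma modFibApp_of_ne {v : ZigVert m} (h : v.toNat ≠ u.toNat) :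
    modFibApp w v = eqToHom (if_neg h) := dif_neg h

lemma modFibApp_self : modFibApp w u = eqToHom (if_pos rfl) ≫ w := by
  unfold modFibApp
  rw [dif_pos rfl]
  simp

/-- The canonical natural transformation from the modified functor to `T`. -/
def modFibTrans : Paths.lift (modPreFib T u S w hno) ⟶ T := by
  refine pathsNatTrans _ _ (fun v => modFibApp w v) ?_
  intro a b e
  rw [Paths.lift_toPath]
  show (modPreFib T u S w hno).map e ≫ modFibApp w b = modFibApp w a ≫ T.map e.toPath
  unfold modPreFib modFibApp
  dsimp only
  by_cases ha : a.toNat = u.toNat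
  · rw [dif_pos ha, dif_pos ha, dif_neg (hno e)]
    simp
  · rw [dif_neg ha, dif_neg ha, dif_neg (hno e)]
    simp

lemma modFibTrans_app (v : ZigVert m) : (modFibTrans w hno).app v = modFibApp w v := rfl

end ModFib

section ModFibLift

variable {m : ZigzagWord} {W : MorphismProperty R} [W.IsMultiplicative]
variable {T : ZigCat m ⥤ R} {u : ZigVert m} {S : R}
variable (w : S ⟶ T.obj u) (hno : ∀ {a b : ZigVert m} (_ : a ⟶ b), b.toNat ≠ u.toNat)
variable {T'' : ZigCat m ⥤ R} (ψ : T'' ⟶ T) (gg : T''.obj u ⟶ S)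

/-- Component at `v` of the universal lift into the modified functor. -/
def modFibLiftApp (v : ZigVert m) :
    T''.obj v ⟶ (if v.toNat = u.toNat then S else T.obj v) :=
  if h : v.toNat = u.toNat then
    eqToHom (congrArg T''.obj (eq_vert h)) ≫ gg ≫ eqToHom (if_pos h).symm
  else ψ.app v ≫ eqToHom (if_neg h).symm

lemma modFibLiftApp_of_ne {v : ZigVert m} (h : ¬ v.toNat = u.toNat) :
    modFibLiftApp ψ gg v = ψ.app v ≫ eqToHom (if_neg h).symm := dif_neg h

lemma modFibLiftApp_self : modFibLiftApp ψ gg u = gg ≫ eqToHom (if_pos rfl).symm := by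
  unfold modFibLiftApp
  rw [dif_pos rfl]
  simp

lemma modFibLiftApp_mem (hgg : W gg) (hψ : ∀ v : ZigCat m, W (ψ.app v)) (v : ZigVert m) :
    W (modFibLiftApp ψ gg v) := by
  unfold modFibLiftApp
  split
  · exact W.comp_mem _ _ (w_eqToHom W _) (W.comp_mem _ _ hgg (w_eqToHom W _))
  · exact W.comp_mem _ _ (hψ v) (w_eqToHom W _)

/-- The universal lift into the modified functor. -/
def modFibLift (hgg : ψ.app u = gg ≫ w) : T'' ⟶ Paths.lift (modPreFib T u S w hno) := by
  refine pathsNatTrans _ _ (fun v => modFibLiftApp ψ gg v) ?_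
  intro a b e
  rw [Paths.lift_toPath]
  show T''.map e.toPath ≫ modFibLiftApp ψ gg b
    = modFibLiftApp ψ gg a ≫ (modPreFib T u S w hno).map e
  unfold modFibLiftApp modPreFib
  dsimp only
  have hn : T''.map e.toPath ≫ ψ.app b = ψ.app a ≫ T.map e.toPath := ψ.naturality e.toPath
  by_cases ha : a.toNat = u.toNat
  · obtain rfl : a = u := eq_vert ha
    rw [dif_neg (hno e), dif_pos ha, dif_pos ha, ← Category.assoc, hn, hgg]
    simp
  · rw [dif_neg (hno e), dif_neg ha, dif_neg ha, ← Category.assoc, hn]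
    simp

lemma modFibLift_app (hgg : ψ.app u = gg ≫ w) (v : ZigVert m) :
    (modFibLift w hno ψ gg hgg).app v = modFibLiftApp ψ gg v := rfl

lemma modFibLift_fac (hgg : ψ.app u = gg ≫ w) (v : ZigVert m) :
    modFibLiftApp ψ gg v ≫ modFibApp w v = ψ.app v := by
  unfold modFibLiftApp modFibApp
  by_cases h : v.toNat = u.toNat
  · obtain rfl : v = u := eq_vert h
    rw [dif_pos h, dif_pos h]
    simp [hgg]
  · rw [dif_neg h, dif_neg h]
    simp

end ModFibLift

section ModOp

variable {m : ZigzagWord} {W : MorphismProperty R} [W.IsMultiplicative]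
variable (T : ZigCat m ⥤ R) (u : ZigVert m) (S : R)

/-- The functor obtained from `T` by replacing the object at the vertex `u` by `S`,
postcomposing all arrows into `u` with `w : T.obj u ⟶ S`; it is assumed that no
generating arrow of the quiver starts at `u`. -/
def modPreOp (w : T.obj u ⟶ S)
    (hno : ∀ {a b : ZigVert m} (_ : a ⟶ b), a.toNat ≠ u.toNat) : ZigVert m ⥤q R where
  obj v := if v.toNat = u.toNat then S else T.obj v
  map {a b} e :=
    if hb : b.toNat = u.toNat then
      eqToHom (if_neg (hno e)) ≫ T.map e.toPath ≫ eqToHom (congrArg T.obj (eq_vert hb)) ≫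
        w ≫ eqToHom (if_pos hb).symm
    else
      eqToHom (if_neg (hno e)) ≫ T.map e.toPath ≫ eqToHom (if_neg hb).symm

variable {T u S}
variable (w : T.obj u ⟶ S) (hno : ∀ {a b : ZigVert m} (_ : a ⟶ b), a.toNat ≠ u.toNat)

lemma modOp_obj (v : ZigVert m) :
    (Paths.lift (modPreOp T u S w hno)).obj v = if v.toNat = u.toNat then S else T.obj v :=
  rfl

lemma modOp_rel (hT : IsRelFunctor m W T) (hw : W w) :
    IsRelFunctor m W (Paths.lift (modPreOp T u S w hno)) := by
  intro a b e he
  have h1 : W (T.map (Quiver.Hom.toPath e)) := hT e he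
  show W ((Paths.lift (modPreOp T u S w hno)).map (Quiver.Hom.toPath e))
  rw [Paths.lift_toPath]
  unfold modPreOp
  dsimp only
  split
  · exact W.comp_mem _ _ (w_eqToHom W _) (W.comp_mem _ _ h1 (W.comp_mem _ _ (w_eqToHom W _)
      (W.comp_mem _ _ hw (w_eqToHom W _))))
  · exact W.comp_mem _ _ (w_eqToHom W _) (W.comp_mem _ _ h1 (w_eqToHom W _))

/-- The component at `v` of the canonical map from `T` to the modified functor. -/
def modOpApp (v : ZigVert m) :
    T.obj v ⟶ (if v.toNat = u.toNat then S else T.obj v) :=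
  if h : v.toNat = u.toNat then
    eqToHom (congrArg T.obj (eq_vert h)) ≫ w ≫ eqToHom (if_pos h).symm
  else eqToHom (if_neg h).symm

lemma modOpApp_mem (hw : W w) (v : ZigVert m) : W (modOpApp w v) := by
  unfold modOpApp
  split
  · exact W.comp_mem _ _ (w_eqToHom W _) (W.comp_mem _ _ hw (w_eqToHom W _))
  · exact w_eqToHom W _

lemma modOpApp_of_ne {v : ZigVert m} (h : ¬ v.toNat = u.toNat) :
    modOpApp (T := T) (S := S) w v = eqToHom (if_neg h).symm := dif_neg h

lemma modOpApp_self : modOpApp (T := T) (S := S) w u = w ≫ eqToHom (if_pos rfl).symm := by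
  unfold modOpApp
  rw [dif_pos rfl]
  simp

/-- The canonical natural transformation from `T` to the modified functor. -/
def modOpTrans : T ⟶ Paths.lift (modPreOp T u S w hno) := by
  refine pathsNatTrans _ _ (fun v => modOpApp w v) ?_
  intro a b e
  rw [Paths.lift_toPath]
  show T.map e.toPath ≫ modOpApp w b = modOpApp w a ≫ (modPreOp T u S w hno).map e
  unfold modOpApp modPreOp
  dsimp only
  by_cases hb : b.toNat = u.toNat
  · rw [dif_pos hb, dif_pos hb, dif_neg (hno e)]
    simp
  · rw [dif_neg hb, dif_neg hb, dif_neg (hno e)]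
    simp

lemma modOpTrans_app (v : ZigVert m) : (modOpTrans w hno).app v = modOpApp w v := rfl

variable {T'' : ZigCat m ⥤ R} (ψ : T ⟶ T'') (gg : S ⟶ T''.obj u)

/-- Component at `v` of the universal map out of the modified functor. -/
def modOpLiftApp (v : ZigVert m) :
    (if v.toNat = u.toNat then S else T.obj v) ⟶ T''.obj v :=
  if h : v.toNat = u.toNat then
    eqToHom (if_pos h) ≫ gg ≫ eqToHom (congrArg T''.obj (eq_vert h).symm)
  else eqToHom (if_neg h) ≫ ψ.app v

lemma modOpLiftApp_of_ne {v : ZigVert m} (h : ¬ v.toNat = u.toNat) :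
    modOpLiftApp ψ gg v = eqToHom (if_neg h) ≫ ψ.app v := dif_neg h

lemma modOpLiftApp_self : modOpLiftApp ψ gg u = eqToHom (if_pos rfl) ≫ gg := by
  unfold modOpLiftApp
  rw [dif_pos rfl]
  simp

lemma modOpLiftApp_mem (hgg : W gg) (hψ : ∀ v : ZigCat m, W (ψ.app v)) (v : ZigVert m) :
    W (modOpLiftApp ψ gg v) := by
  unfold modOpLiftApp
  split
  · exact W.comp_mem _ _ (w_eqToHom W _) (W.comp_mem _ _ hgg (w_eqToHom W _))
  · exact W.comp_mem _ _ (w_eqToHom W _) (hψ v)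

/-- The universal map out of the modified functor. -/
def modOpLift (hgg : ψ.app u = w ≫ gg) : Paths.lift (modPreOp T u S w hno) ⟶ T'' := by
  refine pathsNatTrans _ _ (fun v => modOpLiftApp ψ gg v) ?_
  intro a b e
  rw [Paths.lift_toPath]
  show (modPreOp T u S w hno).map e ≫ modOpLiftApp ψ gg b
    = modOpLiftApp ψ gg a ≫ T''.map e.toPath
  unfold modOpLiftApp modPreOp
  dsimp only
  have hn : T.map e.toPath ≫ ψ.app b = ψ.app a ≫ T''.map e.toPath := ψ.naturality e.toPath
  by_cases hb : b.toNat = u.toNat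
  · obtain rfl : b = u := eq_vert hb
    rw [hgg] at hn
    rw [dif_neg (hno e), dif_pos hb, dif_pos hb]
    simp only [Category.assoc, eqToHom_trans, eqToHom_trans_assoc, eqToHom_refl,
      Category.comp_id, Category.id_comp]
    rw [hn]
  · rw [dif_neg (hno e), dif_neg hb, dif_neg hb]
    simp only [Category.assoc, eqToHom_trans, eqToHom_trans_assoc, eqToHom_refl,
      Category.comp_id, Category.id_comp]
    rw [hn]

lemma modOpLift_app (hgg : ψ.app u = w ≫ gg) (v : ZigVert m) :
    (modOpLift w hno ψ gg hgg).app v = modOpLiftApp ψ gg v := rfl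

lemma modOpLift_fac (hgg : ψ.app u = w ≫ gg) (v : ZigVert m) :
    modOpApp w v ≫ modOpLiftApp ψ gg v = ψ.app v := by
  unfold modOpLiftApp modOpApp
  by_cases h : v.toNat = u.toNat
  · obtain rfl : v = u := eq_vert h
    rw [dif_pos h, dif_pos h]
    simp [hgg]
  · rw [dif_neg h, dif_neg h]
    simp

end ModOp

section Wrappers

variable (W : MorphismProperty R) [W.IsMultiplicative]

lemma evalTarget_isFibered (x : R) (m : ZigzagWord) (hm : m ≠ [])
    (hW : m.getLast hm = ZigSym.W) : (evalTarget m W x).IsFibered := by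
  apply Functor.IsFibered.of_exists_isStronglyCartesian
  intro X S f
  have hlen : 0 < m.length := List.length_pos_iff.mpr hm
  have hno : ∀ {a b : ZigVert m} (_ : a ⟶ b), b.toNat ≠ (zigTarget m).toNat :=
    fun e => not_into_target hm hW e
  have hsrc : (zigSource m).toNat ≠ (zigTarget m).toNat := by
    show (0 : ℕ) ≠ m.length; omega
  let F := evalTarget m W x
  let T := X.T
  let SR : R := S
  let w : SR ⟶ T.obj (zigTarget m) := f.1
  let X' : FunS m W x :=
    { T := Paths.lift (modPreFib T (zigTarget m) SR w hno)
      rel := modFib_rel w hno X.rel f.2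
      hx := by
        show (if (zigSource m).toNat = (zigTarget m).toNat then SR else T.obj _) = x
        rw [if_neg hsrc]; exact X.hx }
  let φ : X' ⟶ X :=
    { η := modFibTrans w hno
      mem := fun v => modFibApp_mem w f.2 v
      h₀ := by
        show modFibApp w (zigSource m) = _
        rw [modFibApp_of_ne w hsrc]
        rfl }
  have hobj' : F.obj X' = S := if_pos rfl
  have hliftφ : F.IsHomLift f φ := by
    refine IsHomLift.of_fac' F f φ hobj' rfl ?_
    apply Subtype.ext
    show modFibApp w (zigTarget m) = _
    rw [modFibApp_self]
    simp [WideSub.eqToHom_val]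
    rfl
  refine ⟨X', φ, ?_⟩
  refine { toIsHomLift := hliftφ, universal_property' := ?_ }
  intro X'' g ψ instψ
  have hψu : ψ.η.app ((Paths.of _).obj (zigTarget m)) = g.1 ≫ f.1 := by
    have h1 := congrArg Subtype.val (IsHomLift.fac' F (g ≫ f) ψ)
    rw [eqToHom_refl, eqToHom_refl, Category.id_comp, Category.comp_id] at h1
    exact h1
  let χ : X'' ⟶ X' :=
    { η := modFibLift w hno ψ.η g.1 hψu
      mem := fun v => modFibLiftApp_mem ψ.η g.1 g.2 ψ.mem v
      h₀ := by
        show modFibLiftApp ψ.η g.1 (zigSource m) = _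
        rw [modFibLiftApp_of_ne ψ.η g.1 hsrc]
        have hh := ψ.h₀
        erw [hh, eqToHom_trans]
        rfl }
  have hliftχ : F.IsHomLift g χ := by
    refine IsHomLift.of_fac' F g χ rfl hobj' ?_
    apply Subtype.ext
    show modFibLiftApp (u := zigTarget m) ψ.η g.1 (zigTarget m) = _
    erw [modFibLiftApp_self]
    simp [WideSub.eqToHom_val]
    rfl
  have hfacχ : χ ≫ φ = ψ := by
    apply FunS.Hom.ext'
    apply NatTrans.ext
    funext v
    exact modFibLift_fac w ψ.η g.1 hψu v
  refine ⟨χ, ⟨hliftχ, hfacχ⟩, ?_⟩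
  rintro χ' ⟨hl', hfac'⟩
  apply FunS.Hom.ext'
  apply NatTrans.ext
  funext v
  show χ'.η.app v = modFibLiftApp (u := zigTarget m) ψ.η g.1 v
  by_cases h : ZigVert.toNat (m := m) v = (zigTarget m).toNat
  · obtain rfl : v = (zigTarget m : ZigCat m) := eq_vert h
    erw [modFibLiftApp_self]
    have h1 := congrArg Subtype.val (IsHomLift.fac' F g χ')
    rw [eqToHom_refl, Category.id_comp] at h1
    simp only [WideSub.comp_val, WideSub.eqToHom_val] at h1
    exact h1
  · have h2 : χ'.η.app v ≫ modFibApp w v = ψ.η.app v :=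
      congrArg (fun t => t.η.app v) hfac'
    rw [modFibApp_of_ne w h] at h2
    erw [modFibLiftApp_of_ne ψ.η g.1 h, ← h2]
    erw [Category.assoc, eqToHom_trans]
    exact (Category.comp_id _).symm


lemma evalSource_isFibered (y : R) (m : ZigzagWord) (hm : m ≠ [])
    (hA : m.head hm = ZigSym.A) : (evalSource m W y).IsFibered := by
  apply Functor.IsFibered.of_exists_isStronglyCartesian
  intro X S f
  have hlen : 0 < m.length := List.length_pos_iff.mpr hm
  have hno : ∀ {a b : ZigVert m} (_ : a ⟶ b), b.toNat ≠ (zigSource m).toNat :=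
    fun e => not_into_source hm hA e
  have htgt : (zigTarget m).toNat ≠ (zigSource m).toNat := by
    show m.length ≠ (0 : ℕ); omega
  let F := evalSource m W y
  let T := X.T
  let SR : R := S
  let w : SR ⟶ T.obj (zigSource m) := f.1
  let X' : FunT m W y :=
    { T := Paths.lift (modPreFib T (zigSource m) SR w hno)
      rel := modFib_rel w hno X.rel f.2
      hy := by
        show (if (zigTarget m).toNat = (zigSource m).toNat then SR else T.obj _) = y
        rw [if_neg htgt]; exact X.hy }
  have hobj' : F.obj X' = S := by
    show (if (zigSource m).toNat = (zigSource m).toNat then SR else T.obj (zigSource m)) = SR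
    rw [if_pos rfl]
  let φ : X' ⟶ X :=
    { η := modFibTrans w hno
      mem := fun v => modFibApp_mem w f.2 v
      hₚ := by
        show modFibApp w (zigTarget m) = _
        rw [modFibApp_of_ne w htgt]
        rfl }
  have hliftφ : F.IsHomLift f φ := by
    refine IsHomLift.of_fac' F f φ hobj' rfl ?_
    apply Subtype.ext
    show modFibApp w (zigSource m) = _
    rw [modFibApp_self]
    simp [WideSub.eqToHom_val]
    rfl
  refine ⟨X', φ, ?_⟩
  refine { toIsHomLift := hliftφ, universal_property' := ?_ }
  intro X'' g ψ instψ
  have hψu : ψ.η.app ((Paths.of _).obj (zigSource m)) = g.1 ≫ f.1 := by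
    have h1 := congrArg Subtype.val (IsHomLift.fac' F (g ≫ f) ψ)
    rw [eqToHom_refl, eqToHom_refl, Category.id_comp, Category.comp_id] at h1
    exact h1
  let χ : X'' ⟶ X' :=
    { η := modFibLift w hno ψ.η g.1 hψu
      mem := fun v => modFibLiftApp_mem ψ.η g.1 g.2 ψ.mem v
      hₚ := by
        show modFibLiftApp ψ.η g.1 (zigTarget m) = _
        rw [modFibLiftApp_of_ne ψ.η g.1 htgt]
        have hh := ψ.hₚ
        erw [hh, eqToHom_trans]
        rfl }
  have hliftχ : F.IsHomLift g χ := by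
    refine IsHomLift.of_fac' F g χ rfl hobj' ?_
    apply Subtype.ext
    show modFibLiftApp (u := zigSource m) ψ.η g.1 (zigSource m) = _
    erw [modFibLiftApp_self]
    simp [WideSub.eqToHom_val]
    rfl
  have hfacχ : χ ≫ φ = ψ := by
    apply FunT.Hom.ext'
    apply NatTrans.ext
    funext v
    exact modFibLift_fac w ψ.η g.1 hψu v
  refine ⟨χ, ⟨hliftχ, hfacχ⟩, ?_⟩
  rintro χ' ⟨hl', hfac'⟩
  apply FunT.Hom.ext'
  apply NatTrans.ext
  funext v
  show χ'.η.app v = modFibLiftApp (u := zigSource m) ψ.η g.1 v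
  by_cases h : ZigVert.toNat (m := m) v = (zigSource m).toNat
  · obtain rfl : v = (zigSource m : ZigCat m) := eq_vert h
    erw [modFibLiftApp_self]
    have h1 := congrArg Subtype.val (IsHomLift.fac' F g χ')
    rw [eqToHom_refl, Category.id_comp] at h1
    simp only [WideSub.comp_val, WideSub.eqToHom_val] at h1
    exact h1
  · have h2 : χ'.η.app v ≫ modFibApp w v = ψ.η.app v :=
      congrArg (fun t => t.η.app v) hfac'
    rw [modFibApp_of_ne w h] at h2
    erw [modFibLiftApp_of_ne ψ.η g.1 h, ← h2]
    erw [Category.assoc, eqToHom_trans]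
    exact (Category.comp_id _).symm


lemma evalTarget_op_isFibered (x : R) (m : ZigzagWord) (hm : m ≠ [])
    (hA : m.getLast hm = ZigSym.A) : (evalTarget m W x).op.IsFibered := by
  apply Functor.IsFibered.of_exists_isStronglyCartesian
  intro Xop Sop f
  have hlen : 0 < m.length := List.length_pos_iff.mpr hm
  have hno : ∀ {a b : ZigVert m} (_ : a ⟶ b), a.toNat ≠ (zigTarget m).toNat :=
    fun e => not_from_target hm hA e
  have hsrc : (zigSource m).toNat ≠ (zigTarget m).toNat := by
    show (0 : ℕ) ≠ m.length; omega
  let F := evalTarget m W x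
  let P := F.op
  let X : FunS m W x := Xop.unop
  let T := X.T
  let SR : R := Sop.unop
  let w : T.obj (zigTarget m) ⟶ SR := f.unop.1
  let X' : FunS m W x :=
    { T := Paths.lift (modPreOp T (zigTarget m) SR w hno)
      rel := modOp_rel w hno X.rel f.unop.2
      hx := by
        show (if (zigSource m).toNat = (zigTarget m).toNat then SR else T.obj _) = x
        rw [if_neg hsrc]; exact X.hx }
  have hobj' : F.obj X' = Sop.unop := by
    show (if (zigTarget m).toNat = (zigTarget m).toNat then SR else T.obj (zigTarget m)) = SR
    rw [if_pos rfl]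
  have hobj'' : P.obj (Opposite.op X') = Sop := congrArg Opposite.op hobj'
  let φu : X ⟶ X' :=
    { η := modOpTrans w hno
      mem := fun v => modOpApp_mem w f.unop.2 v
      h₀ := by
        show modOpApp w (zigSource m) = _
        rw [modOpApp_of_ne w hsrc]
        rfl }
  have hliftφ : P.IsHomLift f φu.op := by
    refine IsHomLift.of_fac' P f φu.op hobj'' rfl ?_
    apply Quiver.Hom.unop_inj
    apply Subtype.ext
    have : ((P.map φu.op).unop).1 = modOpApp (u := zigTarget m) w (zigTarget m) := rfl
    rw [this, modOpApp_self]
    simp only [unop_comp, eqToHom_unop, WideSub.comp_val, WideSub.eqToHom_val]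
    erw [eqToHom_refl, Category.id_comp]
    rfl
  refine ⟨Opposite.op X', φu.op, ?_⟩
  refine { toIsHomLift := hliftφ, universal_property' := ?_ }
  intro a' g ψ instψ
  let gg : SR ⟶ (Opposite.unop a').T.obj (zigTarget m) := g.unop.1
  have hψu : ψ.unop.η.app ((Paths.of _).obj (zigTarget m)) = w ≫ gg := by
    have h1 := congrArg Subtype.val (congrArg Quiver.Hom.unop (IsHomLift.fac' P (g ≫ f) ψ))
    rw [eqToHom_refl, eqToHom_refl, Category.id_comp, Category.comp_id] at h1
    exact h1
  let χu : X' ⟶ Opposite.unop a' :=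
    { η := modOpLift w hno ψ.unop.η gg hψu
      mem := fun v => modOpLiftApp_mem ψ.unop.η gg g.unop.2 ψ.unop.mem v
      h₀ := by
        show modOpLiftApp ψ.unop.η gg (zigSource m) = _
        rw [modOpLiftApp_of_ne ψ.unop.η gg hsrc]
        have hh := ψ.unop.h₀
        erw [hh, eqToHom_trans]
        rfl }
  have hliftχ : P.IsHomLift g χu.op := by
    refine IsHomLift.of_fac' P g χu.op rfl hobj'' ?_
    apply Quiver.Hom.unop_inj
    apply Subtype.ext
    have : ((P.map χu.op).unop).1
        = modOpLiftApp (u := zigTarget m) ψ.unop.η gg (zigTarget m) := rfl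
    rw [this, modOpLiftApp_self]
    simp only [unop_comp, eqToHom_unop, WideSub.comp_val, WideSub.eqToHom_val]
    erw [eqToHom_refl, Category.comp_id]
    rfl
  have hfacχ : χu.op ≫ φu.op = ψ := by
    apply Quiver.Hom.unop_inj
    show φu ≫ χu = ψ.unop
    apply FunS.Hom.ext'
    apply NatTrans.ext
    funext v
    exact modOpLift_fac w ψ.unop.η gg hψu v
  refine ⟨χu.op, ⟨hliftχ, hfacχ⟩, ?_⟩
  rintro χ' ⟨hl', hfac'⟩
  apply Quiver.Hom.unop_inj
  show χ'.unop = χu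
  apply FunS.Hom.ext'
  apply NatTrans.ext
  funext v
  show χ'.unop.η.app v = modOpLiftApp (u := zigTarget m) ψ.unop.η gg v
  by_cases h : ZigVert.toNat (m := m) v = (zigTarget m).toNat
  · obtain rfl : v = (zigTarget m : ZigCat m) := eq_vert h
    rw [modOpLiftApp_self]
    have h1 := congrArg Subtype.val (congrArg Quiver.Hom.unop (IsHomLift.fac' P g χ'))
    rw [eqToHom_refl, Category.id_comp] at h1
    simp only [unop_comp, eqToHom_unop, WideSub.comp_val, WideSub.eqToHom_val] at h1
    exact h1
  · have hfac'' : φu ≫ χ'.unop = ψ.unop := congrArg Quiver.Hom.unop hfac'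
    have h2 : modOpApp w v ≫ χ'.unop.η.app v = ψ.unop.η.app v :=
      congrArg (fun t => t.η.app v) hfac''
    rw [modOpApp_of_ne w h] at h2
    rw [modOpLiftApp_of_ne ψ.unop.η gg h, ← h2]
    erw [eqToHom_trans_assoc]
    exact (Category.id_comp _).symm


lemma evalSource_op_isFibered (y : R) (m : ZigzagWord) (hm : m ≠ [])
    (hW : m.head hm = ZigSym.W) : (evalSource m W y).op.IsFibered := by
  apply Functor.IsFibered.of_exists_isStronglyCartesian
  intro Xop Sop f
  have hlen : 0 < m.length := List.length_pos_iff.mpr hm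
  have hno : ∀ {a b : ZigVert m} (_ : a ⟶ b), a.toNat ≠ (zigSource m).toNat :=
    fun e => not_from_source hm hW e
  have htgt : (zigTarget m).toNat ≠ (zigSource m).toNat := by
    show m.length ≠ (0 : ℕ); omega
  let F := evalSource m W y
  let P := F.op
  let X : FunT m W y := Xop.unop
  let T := X.T
  let SR : R := Sop.unop
  let w : T.obj (zigSource m) ⟶ SR := f.unop.1
  let X' : FunT m W y :=
    { T := Paths.lift (modPreOp T (zigSource m) SR w hno)
      rel := modOp_rel w hno X.rel f.unop.2
      hy := by
        show (if (zigTarget m).toNat = (zigSource m).toNat then SR else T.obj _) = y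
        rw [if_neg htgt]; exact X.hy }
  have hobj' : F.obj X' = Sop.unop := by
    show (if (zigSource m).toNat = (zigSource m).toNat then SR else T.obj (zigSource m)) = SR
    rw [if_pos rfl]
  have hobj'' : P.obj (Opposite.op X') = Sop := congrArg Opposite.op hobj'
  let φu : X ⟶ X' :=
    { η := modOpTrans w hno
      mem := fun v => modOpApp_mem w f.unop.2 v
      hₚ := by
        show modOpApp w (zigTarget m) = _
        rw [modOpApp_of_ne w htgt]
        rfl }
  have hliftφ : P.IsHomLift f φu.op := by
    refine IsHomLift.of_fac' P f φu.op hobj'' rfl ?_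
    apply Quiver.Hom.unop_inj
    apply Subtype.ext
    have : ((P.map φu.op).unop).1 = modOpApp (u := zigSource m) w (zigSource m) := rfl
    rw [this, modOpApp_self]
    simp only [unop_comp, eqToHom_unop, WideSub.comp_val, WideSub.eqToHom_val]
    erw [eqToHom_refl, Category.id_comp]
    rfl
  refine ⟨Opposite.op X', φu.op, ?_⟩
  refine { toIsHomLift := hliftφ, universal_property' := ?_ }
  intro a' g ψ instψ
  let gg : SR ⟶ (Opposite.unop a').T.obj (zigSource m) := g.unop.1
  have hψu : ψ.unop.η.app ((Paths.of _).obj (zigSource m)) = w ≫ gg := by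
    have h1 := congrArg Subtype.val (congrArg Quiver.Hom.unop (IsHomLift.fac' P (g ≫ f) ψ))
    rw [eqToHom_refl, eqToHom_refl, Category.id_comp, Category.comp_id] at h1
    exact h1
  let χu : X' ⟶ Opposite.unop a' :=
    { η := modOpLift w hno ψ.unop.η gg hψu
      mem := fun v => modOpLiftApp_mem ψ.unop.η gg g.unop.2 ψ.unop.mem v
      hₚ := by
        show modOpLiftApp ψ.unop.η gg (zigTarget m) = _
        rw [modOpLiftApp_of_ne ψ.unop.η gg htgt]
        have hh := ψ.unop.hₚ
        erw [hh, eqToHom_trans]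
        rfl }
  have hliftχ : P.IsHomLift g χu.op := by
    refine IsHomLift.of_fac' P g χu.op rfl hobj'' ?_
    apply Quiver.Hom.unop_inj
    apply Subtype.ext
    have : ((P.map χu.op).unop).1
        = modOpLiftApp (u := zigSource m) ψ.unop.η gg (zigSource m) := rfl
    rw [this, modOpLiftApp_self]
    simp only [unop_comp, eqToHom_unop, WideSub.comp_val, WideSub.eqToHom_val]
    erw [eqToHom_refl, Category.comp_id]
    rfl
  have hfacχ : χu.op ≫ φu.op = ψ := by
    apply Quiver.Hom.unop_inj
    show φu ≫ χu = ψ.unop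
    apply FunT.Hom.ext'
    apply NatTrans.ext
    funext v
    exact modOpLift_fac w ψ.unop.η gg hψu v
  refine ⟨χu.op, ⟨hliftχ, hfacχ⟩, ?_⟩
  rintro χ' ⟨hl', hfac'⟩
  apply Quiver.Hom.unop_inj
  show χ'.unop = χu
  apply FunT.Hom.ext'
  apply NatTrans.ext
  funext v
  show χ'.unop.η.app v = modOpLiftApp (u := zigSource m) ψ.unop.η gg v
  by_cases h : ZigVert.toNat (m := m) v = (zigSource m).toNat
  · obtain rfl : v = (zigSource m : ZigCat m) := eq_vert h
    rw [modOpLiftApp_self]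
    have h1 := congrArg Subtype.val (congrArg Quiver.Hom.unop (IsHomLift.fac' P g χ'))
    rw [eqToHom_refl, Category.id_comp] at h1
    simp only [unop_comp, eqToHom_unop, WideSub.comp_val, WideSub.eqToHom_val] at h1
    exact h1
  · have hfac'' : φu ≫ χ'.unop = ψ.unop := congrArg Quiver.Hom.unop hfac'
    have h2 : modOpApp w v ≫ χ'.unop.η.app v = ψ.unop.η.app v :=
      congrArg (fun t => t.η.app v) hfac''
    rw [modOpApp_of_ne w h] at h2
    rw [modOpLiftApp_of_ne ψ.unop.η gg h, ← h2]
    erw [eqToHom_trans_assoc]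
    exact (Category.id_comp _).symm

end Wrappers
/-- For a nonempty zigzag word `m = (t 1, …, t p)`:
(i) if `t p = A`, evaluation at the vertex `p` on `Fun_s(m, R; x)` is a Grothendieck
opfibration over `𝒲` (its opposite is a Grothendieck fibration);
(ii) if `t p = W`, it is a Grothendieck fibration;
(iii) if `t 1 = W`, evaluation at the vertex `0` on `Fun_t(m, R; y)` is a Grothendieck
opfibration; and
(iv) if `t 1 = A`, it is a Grothendieck fibration. -/
theorem eval_fibration_of_zigzagWord
    (W : MorphismProperty R) [W.IsMultiplicative] (x y : R)
    (m : ZigzagWord) (hm : m ≠ []) :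
    (m.getLast hm = ZigSym.A → (evalTarget m W x).op.IsFibered) ∧
    (m.getLast hm = ZigSym.W → (evalTarget m W x).IsFibered) ∧
    (m.head hm = ZigSym.W → (evalSource m W y).op.IsFibered) ∧
    (m.head hm = ZigSym.A → (evalSource m W y).IsFibered) :=
  ⟨evalTarget_op_isFibered W x m hm, evalTarget_isFibered W x m hm,
    evalSource_op_isFibered W y m hm, evalSource_isFibered W y m hm⟩
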